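/- For every J ≥ 1, the learned feature set of the cold-started model equals that of the ideal model: L_cold^(J) = L_ideal^(J). In particular, for every J ≥ 2, ACC(L_cold^(J)) = ACC(L_ideal^(J)). -/

import Mathlib

open Finset

/-- Number of data points in `N` whose feature set contains the feature `v`. -/
def featCount {F X : Type} [DecidableEq F] (feats : X → Finset F)
    (N : Finset X) (v : F) : ℕ :=
  (N.filter fun x => v ∈ feats x).card

/-- `g(v; T, N)`: the frequency of feature `v` among the data points of `N`,
normalized by the size of the full training set `T`. -/
noncomputable def gval {F X : Type} [DecidableEq F] (feats : X → Finset F)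
    (T N : Finset X) (v : F) : ℝ :=
  (featCount feats N v : ℝ) / (T.card : ℝ)

/-- The set of data points of `T` with nonzero gradient: not memorized (not in
`M`) and not well-classified by the learned set `L` (fewer than `τ` of their
features are learned). -/
def active {F X : Type} [DecidableEq F] [DecidableEq X] (feats : X → Finset F) (τ : ℕ)
    (L : Finset F) (M T : Finset X) : Finset X :=
  (T \ M).filter fun x => ((feats x) ∩ L).card < τ

/-- The learned set after the first `i` steps of a run `us` starting from `L0`. -/
def learnedAfter {F : Type} [DecidableEq F] (L0 : Finset F) (us : List F)
    (i : ℕ) : Finset F :=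
  L0 ∪ (us.take i).toFinset

/-- `us` is a valid greedy training run on the dataset `T` with initially
memorized set `M`, starting from the learned set `L0`; `S` is the set of all
features, `τ` the well-classification threshold and `γ` the noise strength.
At every step the model picks a not-yet-learned feature of maximal frequency
`g` among the active (nonzero-gradient) data points; it is learned if its
frequency is at least `γ/|T|`, and at the end of the run every remaining
unlearned feature has frequency below `γ/|T|` (the remaining active points are
then memorized). -/
structure IsRun {F X : Type} [DecidableEq F] [DecidableEq X] (S : Finset F)
    (feats : X → Finset F) (τ : ℕ) (γ : ℝ) (T M : Finset X)
    (L0 : Finset F) (us : List F) : Prop where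
  mem : ∀ i (h : i < us.length), us.get ⟨i, h⟩ ∈ S \ learnedAfter L0 us i
  maximal : ∀ i (h : i < us.length), ∀ u ∈ S \ learnedAfter L0 us i,
    gval feats T (active feats τ (learnedAfter L0 us i) M T) u ≤
      gval feats T (active feats τ (learnedAfter L0 us i) M T) (us.get ⟨i, h⟩)
  threshold : ∀ i (h : i < us.length),
    γ / (T.card : ℝ) ≤
      gval feats T (active feats τ (learnedAfter L0 us i) M T) (us.get ⟨i, h⟩)
  stopped : ∀ u ∈ S \ learnedAfter L0 us us.length,
    gval feats T (active feats τ (learnedAfter L0 us us.length) M T) u <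
      γ / (T.card : ℝ)

/-- The memorized set after a run: the previously memorized points together
with all points that are still active (not well-classified) at the end of the
run. -/
def finalM {F X : Type} [DecidableEq F] [DecidableEq X] (feats : X → Finset F) (τ : ℕ)
    (T M : Finset X) (L0 : Finset F) (us : List F) : Finset X :=
  M ∪ active feats τ (L0 ∪ us.toFinset) M T

/-- The cumulative dataset `T_{1:j}`, the union of the first `j` chunks. -/
def cumT {X : Type} [DecidableEq X] (chunk : ℕ → Finset X) (j : ℕ) : Finset X :=
  (Finset.Icc 1 j).biUnion chunk

/-- `h(v; L)`: the fraction of data points (of one chunk) containing `v` that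
are not well-classified by the learned set `L`. -/
noncomputable def hval {F : Type} [DecidableEq F] (C : ℕ) (Sc : Fin C → Finset F)
    (nA : Fin C → Finset F → ℕ) (τ n : ℕ) (v : F) (L : Finset F) : ℝ :=
  (1 / (n : ℝ)) * ∑ c : Fin C, ∑ A ∈ (Sc c).powerset,
    (nA c A : ℝ) * (if v ∈ A ∧ (A ∩ L).card < τ then 1 else 0)

/-- The test accuracy of a learned feature set `L`. -/
noncomputable def ACC {F : Type} [DecidableEq F] (C : ℕ) (Sc : Fin C → Finset F)
    (nA : Fin C → Finset F → ℕ) (τ n : ℕ) (L : Finset F) : ℝ :=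
  1 - ((C : ℝ) - 1) / (C : ℝ) * ((1 / (n : ℝ)) *
    ∑ c : Fin C, ∑ A ∈ (Sc c).powerset,
      (nA c A : ℝ) * (if (A ∩ L).card < τ then 1 else 0))

namespace ColdAux

variable {F X : Type} [DecidableEq F] [DecidableEq X]

/-- Abstract greedy run: pick argmax of `hv · L` within `Scc`, learn while ≥ θ. -/
def CRun (Scc : Finset F) (hv : F → Finset F → ℝ) (θ : ℝ) : Finset F → List F → Prop
  | L0, [] => ∀ u ∈ Scc, u ∉ L0 → hv u L0 < θ
  | L0, w :: ws => w ∈ Scc ∧ w ∉ L0 ∧ θ ≤ hv w L0 ∧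
      (∀ u ∈ Scc, u ∉ L0 → hv u L0 ≤ hv w L0) ∧ CRun Scc hv θ (insert w L0) ws

lemma crun_subset {Scc : Finset F} {hv θ} :
    ∀ {us : List F} {L0}, CRun Scc hv θ L0 us → ∀ x ∈ us, x ∈ Scc := by
  intro us
  induction us with
  | nil => intro L0 _ x hx; simp at hx
  | cons w ws ih =>
    intro L0 h x hx
    rcases List.mem_cons.1 hx with rfl | hx
    · exact h.1
    · exact ih h.2.2.2.2 x hx

lemma crun_congr {Scc : Finset F} {hv : F → Finset F → ℝ} {θ : ℝ}
    (hcong : ∀ v ∈ Scc, ∀ L L' : Finset F, L ∩ Scc = L' ∩ Scc → hv v L = hv v L') :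
    ∀ {ws : List F} {L0 L0' : Finset F}, L0 ∩ Scc = L0' ∩ Scc →
      CRun Scc hv θ L0 ws → CRun Scc hv θ L0' ws := by
  intro ws
  induction ws with
  | nil =>
    intro L0 L0' hE h u hu hu'
    have hu0 : u ∉ L0 := by
      intro hc
      have : u ∈ L0 ∩ Scc := Finset.mem_inter.2 ⟨hc, hu⟩
      rw [hE] at this
      exact hu' (Finset.mem_inter.1 this).1
    have := h u hu hu0
    rwa [hcong u hu L0 L0' hE] at this
  | cons w rest ih =>
    intro L0 L0' hE h
    obtain ⟨hw, hwL, hθ, hmax, htail⟩ := h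
    have hwL' : w ∉ L0' := by
      intro hc
      have : w ∈ L0' ∩ Scc := Finset.mem_inter.2 ⟨hc, hw⟩
      rw [← hE] at this
      exact hwL (Finset.mem_inter.1 this).1
    have hvw : hv w L0 = hv w L0' := hcong w hw _ _ hE
    refine ⟨hw, hwL', by rwa [hvw] at hθ, ?_, ?_⟩
    · intro u hu hu'
      have hu0 : u ∉ L0 := by
        intro hc
        have : u ∈ L0 ∩ Scc := Finset.mem_inter.2 ⟨hc, hu⟩
        rw [hE] at this
        exact hu' (Finset.mem_inter.1 this).1
      have := hmax u hu hu0
      rwa [hcong u hu L0 L0' hE, hvw] at this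
    · refine ih ?_ htail
      rw [Finset.insert_inter_of_mem hw, Finset.insert_inter_of_mem hw, hE]

lemma crun_unique {S Scc : Finset F} {hv : F → Finset F → ℝ} {θ : ℝ}
    (hsub : Scc ⊆ S)
    (hinj : ∀ L : Finset F, L ⊆ S → ∀ v₁ ∈ Scc, ∀ v₂ ∈ Scc,
      hv v₁ L = hv v₂ L → v₁ = v₂) :
    ∀ {ws ws' : List F} {L0 : Finset F}, L0 ⊆ S →
      CRun Scc hv θ L0 ws → CRun Scc hv θ L0 ws' → ws = ws' := by
  intro ws
  induction ws with
  | nil =>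
    intro ws' L0 hL0 h h'
    cases ws' with
    | nil => rfl
    | cons w rest =>
      exact absurd h'.2.2.1 (not_le.2 (h w h'.1 h'.2.1))
  | cons w rest ih =>
    intro ws' L0 hL0 h h'
    cases ws' with
    | nil => exact absurd h.2.2.1 (not_le.2 (h' w h.1 h.2.1))
    | cons w' rest' =>
      have heq : w = w' := by
        apply hinj L0 hL0 w h.1 w' h'.1
        exact le_antisymm (h'.2.2.2.1 w h.1 h.2.1) (h.2.2.2.1 w' h'.1 h'.2.1)
      subst heq
      have : rest = rest' :=
        ih (Finset.insert_subset (hsub h.1) hL0) h.2.2.2.2 h'.2.2.2.2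
      rw [this]

lemma crun_concat {S Scc : Finset F} {hv : F → Finset F → ℝ} {θ θ' : ℝ}
    (hsub : Scc ⊆ S) (hθ : θ' ≤ θ)
    (hinj : ∀ L : Finset F, L ⊆ S → ∀ v₁ ∈ Scc, ∀ v₂ ∈ Scc,
      hv v₁ L = hv v₂ L → v₁ = v₂) :
    ∀ {ws zs ws' : List F} {L0 : Finset F}, L0 ⊆ S →
      CRun Scc hv θ L0 ws → CRun Scc hv θ' (L0 ∪ ws.toFinset) zs →
      CRun Scc hv θ' L0 ws' → ws' = ws ++ zs := by
  intro ws
  induction ws with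
  | nil =>
    intro zs ws' L0 hL0 _ hz hw'
    simp only [List.toFinset_nil, Finset.union_empty] at hz
    simpa using crun_unique hsub hinj hL0 hw' hz
  | cons w rest ih =>
    intro zs ws' L0 hL0 h hz hw'
    obtain ⟨hwScc, hwL, hθw, hmax, htail⟩ := h
    cases ws' with
    | nil => exact absurd (hw' w hwScc hwL) (not_lt.2 (le_trans hθ hθw))
    | cons w' rest' =>
      have heq : w' = w := by
        apply hinj L0 hL0 w' hw'.1 w hwScc
        exact le_antisymm (hmax w' hw'.1 hw'.2.1) (hw'.2.2.2.1 w hwScc hwL)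
      subst heq
      have hset : L0 ∪ (w' :: rest).toFinset = insert w' L0 ∪ rest.toFinset := by
        ext a; simp [List.toFinset_cons]
      have hz' : CRun Scc hv θ' (insert w' L0 ∪ rest.toFinset) zs := by
        rwa [hset] at hz
      have := ih (Finset.insert_subset (hsub hwScc) hL0) htail hz' hw'.2.2.2.2
      rw [List.cons_append, this]


/-- extraction of the class-restricted run from a global run -/
lemma crun_filter {S Scc : Finset F} {hv : F → Finset F → ℝ} {θ : ℝ}
    (hsub : Scc ⊆ S)
    (hcong : ∀ v ∈ Scc, ∀ L L' : Finset F, L ∩ Scc = L' ∩ Scc → hv v L = hv v L') :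
    ∀ {us : List F} {L0 : Finset F}, CRun S hv θ L0 us →
      CRun Scc hv θ L0 (us.filter (· ∈ Scc)) := by
  intro us
  induction us with
  | nil =>
    intro L0 h
    simpa [CRun] using fun u hu => h u (hsub hu)
  | cons w rest ih =>
    intro L0 h
    obtain ⟨hwS, hwL, hθw, hmax, htail⟩ := h
    by_cases hw : w ∈ Scc
    · rw [List.filter_cons_of_pos (by simpa using hw)]
      exact ⟨hw, hwL, hθw, fun u hu hu' => hmax u (hsub hu) hu', ih htail⟩
    · rw [List.filter_cons_of_neg (by simpa using hw)]
      refine crun_congr hcong ?_ (ih htail)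
      rw [Finset.insert_inter_of_notMem hw]


lemma learnedAfter_zero (L0 : Finset F) (us : List F) : learnedAfter L0 us 0 = L0 := by
  simp [learnedAfter]

lemma learnedAfter_cons (L0 : Finset F) (w : F) (rest : List F) (i : ℕ) :
    learnedAfter L0 (w :: rest) (i + 1) = learnedAfter (insert w L0) rest i := by
  ext a; simp [learnedAfter, List.take_succ_cons]


/-- converting an `IsRun` (with `M = ∅`) into an abstract `CRun` on `S`. -/
lemma isRun_crun {S : Finset F} {feats : X → Finset F} {τ : ℕ} {γ : ℝ} {T : Finset X}
    {hv : F → Finset F → ℝ}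
    (hb : ∀ (L : Finset F) (v : F),
      gval feats T (active feats τ L ∅ T) v = hv v L) :
    ∀ {us : List F} {L0 : Finset F}, IsRun S feats τ γ T ∅ L0 us →
      CRun S hv (γ / (T.card : ℝ)) L0 us := by
  intro us
  induction us with
  | nil =>
    intro L0 h
    intro u hu hu'
    have := h.stopped u (by simp [learnedAfter_zero]; exact ⟨hu, hu'⟩)
    rwa [List.length_nil, learnedAfter_zero, hb] at this
  | cons w rest ih =>
    intro L0 h
    have h0 : (0 : ℕ) < (w :: rest).length := by simp
    have hmem := h.mem 0 h0
    rw [learnedAfter_zero] at hmem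
    simp only [List.get] at hmem
    have hw : w ∈ S ∧ w ∉ L0 := by
      constructor
      · exact (Finset.mem_sdiff.1 hmem).1
      · exact (Finset.mem_sdiff.1 hmem).2
    have hthr := h.threshold 0 h0
    rw [learnedAfter_zero, hb] at hthr
    simp only [List.get] at hthr
    have hmax : ∀ u ∈ S, u ∉ L0 → hv u L0 ≤ hv w L0 := by
      intro u hu hu'
      have := h.maximal 0 h0 u (by rw [learnedAfter_zero]; exact Finset.mem_sdiff.2 ⟨hu, hu'⟩)
      rw [learnedAfter_zero, hb, hb] at this
      simpa using this
    have htail : IsRun S feats τ γ T ∅ (insert w L0) rest := by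
      constructor
      · intro i hi
        have := h.mem (i + 1) (by simpa using Nat.succ_lt_succ hi)
        rwa [learnedAfter_cons, List.get_cons_succ] at this
      · intro i hi u hu
        have := h.maximal (i + 1) (by simpa using Nat.succ_lt_succ hi) u
          (by rwa [learnedAfter_cons])
        rwa [learnedAfter_cons, List.get_cons_succ] at this
      · intro i hi
        have := h.threshold (i + 1) (by simpa using Nat.succ_lt_succ hi)
        rwa [learnedAfter_cons, List.get_cons_succ] at this
      · intro u hu
        have := h.stopped u (by rw [List.length_cons, learnedAfter_cons]; exact hu)
        rwa [List.length_cons, learnedAfter_cons] at this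
    exact ⟨hw.1, hw.2, hthr, hmax, ih htail⟩


end ColdAux

open ColdAux
set_option linter.unusedSectionVars false
section Bridge
variable {F X : Type} [DecidableEq F] [DecidableEq X]

lemma card_filter_eq_sum (C : ℕ) (Sc : Fin C → Finset F) (label : X → Fin C)
    (feats : X → Finset F) (nA : Fin C → Finset F → ℕ)
    (hfeats : ∀ x, feats x ⊆ Sc (label x)) (T : Finset X)
    (hcnt : ∀ c : Fin C, ∀ A ∈ (Sc c).powerset,
      (T.filter fun x => label x = c ∧ feats x = A).card = nA c A)
    (p : Finset F → Prop) [DecidablePred p] :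
    (T.filter fun x => p (feats x)).card
      = ∑ c : Fin C, ∑ A ∈ (Sc c).powerset, if p A then nA c A else 0 := by
  rw [Finset.card_eq_sum_card_fiberwise
    (f := label) (t := Finset.univ) (fun x _ => Finset.mem_univ _)]
  refine Finset.sum_congr rfl fun c _ => ?_
  rw [Finset.card_eq_sum_card_fiberwise (f := feats) (t := (Sc c).powerset)
    (s := (T.filter fun x => p (feats x)).filter fun x => label x = c)
    (fun x hx => by
      simp only [Finset.mem_coe, Finset.mem_filter] at hx
      exact Finset.mem_powerset.2 (hx.2 ▸ hfeats x))]
  refine Finset.sum_congr rfl fun A hA => ?_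
  rw [Finset.filter_filter, Finset.filter_filter]
  by_cases hp : p A
  · rw [if_pos hp, ← hcnt c A hA]
    apply congrArg
    apply Finset.filter_congr
    intro x _
    constructor
    · rintro ⟨-, h1, h2⟩; exact ⟨h1, h2⟩
    · rintro ⟨h1, h2⟩; exact ⟨h2 ▸ hp, h1, h2⟩
  · rw [if_neg hp]
    rw [Finset.card_eq_zero, Finset.filter_eq_empty_iff]
    rintro x - ⟨hpx, -, hfx⟩
    exact hp (hfx ▸ hpx)

lemma cumT_filter_card (chunk : ℕ → Finset X) (j : ℕ)
    (hchunkdisj : ∀ l l', l ≠ l' → Disjoint (chunk l) (chunk l'))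
    (q : X → Prop) [DecidablePred q] (m : ℕ)
    (hm : ∀ l, 1 ≤ l → ((chunk l).filter q).card = m) :
    ((cumT chunk j).filter q).card = j * m := by
  rw [cumT, Finset.filter_biUnion, Finset.card_biUnion
    (fun l _ l' _ hll' => Finset.disjoint_filter_filter (hchunkdisj l l' hll'))]
  rw [Finset.sum_congr rfl (fun l hl => hm l (Finset.mem_Icc.1 hl).1),
    Finset.sum_const, Nat.card_Icc, smul_eq_mul]
  simp

lemma cumT_card (chunk : ℕ → Finset X) (j n : ℕ)
    (hchunkdisj : ∀ l l', l ≠ l' → Disjoint (chunk l) (chunk l'))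
    (hchunkcard : ∀ l, 1 ≤ l → (chunk l).card = n) :
    (cumT chunk j).card = j * n := by
  rw [cumT, Finset.card_biUnion (fun l _ l' _ hll' => hchunkdisj l l' hll')]
  rw [Finset.sum_congr rfl (fun l hl => hchunkcard l (Finset.mem_Icc.1 hl).1),
    Finset.sum_const, Nat.card_Icc, smul_eq_mul]
  simp

lemma gval_eq_hval (C τ n : ℕ) (Sc : Fin C → Finset F) (label : X → Fin C)
    (feats : X → Finset F) (nA : Fin C → Finset F → ℕ) (chunk : ℕ → Finset X)
    (hfeats : ∀ x, feats x ⊆ Sc (label x))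
    (hchunkdisj : ∀ l l', l ≠ l' → Disjoint (chunk l) (chunk l'))
    (hcount : ∀ l, 1 ≤ l → ∀ c : Fin C, ∀ A ∈ (Sc c).powerset,
      ((chunk l).filter fun x => label x = c ∧ feats x = A).card = nA c A)
    (j : ℕ) (hj : 1 ≤ j) (hn : 0 < n)
    (hcard : (cumT chunk j).card = j * n)
    (L : Finset F) (v : F) :
    gval feats (cumT chunk j) (active feats τ L ∅ (cumT chunk j)) v
      = hval C Sc nA τ n v L := by
  classical
  set m : ℕ := ∑ c : Fin C, ∑ A ∈ (Sc c).powerset,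
    if (A ∩ L).card < τ ∧ v ∈ A then nA c A else 0 with hm
  have hfc : featCount feats (active feats τ L ∅ (cumT chunk j)) v = j * m := by
    rw [featCount, active, Finset.sdiff_empty, Finset.filter_filter]
    have := cumT_filter_card chunk j hchunkdisj
      (fun x => ((feats x) ∩ L).card < τ ∧ v ∈ feats x) m
      (fun l hl => by
        rw [card_filter_eq_sum C Sc label feats nA hfeats (chunk l)
          (hcount l hl) (fun A => (A ∩ L).card < τ ∧ v ∈ A)])
    exact this
  rw [gval, hfc, hcard, hval]
  have hmn : (m : ℝ) = ∑ c : Fin C, ∑ A ∈ (Sc c).powerset,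
      (nA c A : ℝ) * (if v ∈ A ∧ (A ∩ L).card < τ then 1 else 0) := by
    rw [hm]
    push_cast
    refine Finset.sum_congr rfl fun c _ => Finset.sum_congr rfl fun A _ => ?_
    rw [mul_ite, mul_one, mul_zero, if_congr and_comm rfl rfl]
  rw [← hmn]
  have hj0 : (j : ℝ) ≠ 0 := Nat.cast_ne_zero.2 (by omega)
  have hn0 : (n : ℝ) ≠ 0 := Nat.cast_ne_zero.2 (by omega)
  push_cast
  field_simp

end Bridge


lemma hval_class_congr {F : Type} [DecidableEq F] (C τ n : ℕ) (Sc : Fin C → Finset F)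
    (nA : Fin C → Finset F → ℕ)
    (hdisjS : ∀ c c', c ≠ c' → Disjoint (Sc c) (Sc c'))
    (c : Fin C) (v : F) (hvc : v ∈ Sc c) (L L' : Finset F)
    (hE : L ∩ Sc c = L' ∩ Sc c) :
    hval C Sc nA τ n v L = hval C Sc nA τ n v L' := by
  rw [hval, hval]
  congr 1
  refine Finset.sum_congr rfl fun c' _ => Finset.sum_congr rfl fun A hA => ?_
  by_cases hc : c' = c
  · subst hc
    have hAL : A ∩ L = A ∩ L' := by
      ext a
      have hAs : a ∈ A → a ∈ Sc c' := fun ha => Finset.mem_powerset.1 hA ha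
      constructor
      · rintro ha
        obtain ⟨ha1, ha2⟩ := Finset.mem_inter.1 ha
        have : a ∈ L' ∩ Sc c' := hE ▸ Finset.mem_inter.2 ⟨ha2, hAs ha1⟩
        exact Finset.mem_inter.2 ⟨ha1, (Finset.mem_inter.1 this).1⟩
      · rintro ha
        obtain ⟨ha1, ha2⟩ := Finset.mem_inter.1 ha
        have : a ∈ L ∩ Sc c' := hE ▸ Finset.mem_inter.2 ⟨ha2, hAs ha1⟩
        exact Finset.mem_inter.2 ⟨ha1, (Finset.mem_inter.1 this).1⟩
    rw [hAL]
  · have hvA : v ∉ A := fun hva =>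
      (Finset.disjoint_left.1 (hdisjS c' c hc)) (Finset.mem_powerset.1 hA hva) hvc
    simp [hvA]

/-- Theorem 3.5, accuracy part: for every `J ≥ 1` the
learned feature set of the cold-started model equals that of the ideal model,
`L_cold^(J) = L_ideal^(J)`; in particular for every `J ≥ 2`,
`ACC(L_cold^(J)) = ACC(L_ideal^(J))`. -/
theorem cold_learned_eq_ideal
    {F X : Type} [DecidableEq F] [DecidableEq X]
    (C K τ : ℕ) (γ : ℝ) (n : ℕ)
    (Sc : Fin C → Finset F) (label : X → Fin C) (feats : X → Finset F)
    (nA : Fin C → Finset F → ℕ) (chunk : ℕ → Finset X)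
    (hγ : 0 < γ) (hτK : τ < K)
    (hK : ∀ c, (Sc c).card = K)
    (hdisjS : ∀ c c', c ≠ c' → Disjoint (Sc c) (Sc c'))
    (hfeats : ∀ x, feats x ⊆ Sc (label x))
    (hnA : ∀ c, ∀ A ∈ (Sc c).powerset, 1 ≤ nA c A)
    (hn : n = ∑ c : Fin C, ∑ A ∈ (Sc c).powerset, nA c A)
    (hchunkdisj : ∀ j j', j ≠ j' → Disjoint (chunk j) (chunk j'))
    (hchunkcard : ∀ j, 1 ≤ j → (chunk j).card = n)
    (hcount : ∀ j, 1 ≤ j → ∀ c : Fin C, ∀ A ∈ (Sc c).powerset,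
      ((chunk j).filter fun x => label x = c ∧ feats x = A).card = nA c A)
    (hC : 0 < C) (hτpos : 0 < τ)
    (hinj : ∀ L : Finset F, L ⊆ Finset.univ.biUnion Sc →
      ∀ c : Fin C, ∀ v₁ ∈ Sc c, ∀ v₂ ∈ Sc c,
        hval C Sc nA τ n v₁ L = hval C Sc nA τ n v₂ L → v₁ = v₂)
    (hii : ∀ c : Fin C, ∃ v : Fin τ → F, Function.Injective v ∧ (∀ i, v i ∈ Sc c) ∧
      ∀ j, 1 ≤ j →
        ((∀ i : Fin τ, (i : ℕ) + 1 < τ →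
            γ / (n : ℝ) ≤ gval feats (chunk j) (chunk j) (v i)) ∧
          gval feats (chunk j) (chunk j)
            (v ⟨τ - 1, Nat.sub_lt hτpos Nat.one_pos⟩) < γ / (n : ℝ)))
    (usc : ℕ → List F)
    (hcold : ∀ j : ℕ,
      IsRun (Finset.univ.biUnion Sc) feats τ γ (cumT chunk (j + 1)) ∅ ∅ (usc (j + 1)))
    (Li : ℕ → Finset F) (usi : ℕ → List F)
    (hLi0 : Li 0 = ∅)
    (hideal : ∀ j : ℕ,
      IsRun (Finset.univ.biUnion Sc) feats τ γ (cumT chunk (j + 1)) ∅ (Li j)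
        (usi (j + 1)) ∧
      Li (j + 1) = Li j ∪ (usi (j + 1)).toFinset)
 :
    (∀ J : ℕ, 1 ≤ J → (usc J).toFinset = Li J) ∧
    (∀ J : ℕ, 2 ≤ J →
      ACC C Sc nA τ n ((usc J).toFinset) = ACC C Sc nA τ n (Li J)) := by
  classical
  set S := Finset.univ.biUnion Sc with hS
  set hv : F → Finset F → ℝ := hval C Sc nA τ n with hhv
  -- positivity of n
  have hn1 : 0 < n := by
    have c0 : Fin C := ⟨0, hC⟩
    have h0 : ∅ ∈ (Sc c0).powerset := Finset.mem_powerset.2 (Finset.empty_subset _)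
    have h1 : 1 ≤ ∑ A ∈ (Sc c0).powerset, nA c0 A :=
      le_trans (hnA c0 ∅ h0)
        (Finset.single_le_sum (fun _ _ => Nat.zero_le _) h0)
    have h2 : ∑ A ∈ (Sc c0).powerset, nA c0 A
        ≤ ∑ c : Fin C, ∑ A ∈ (Sc c).powerset, nA c A :=
      Finset.single_le_sum (f := fun c => ∑ A ∈ (Sc c).powerset, nA c A)
        (fun _ _ => Nat.zero_le _) (Finset.mem_univ c0)
    omega
  have hcardT : ∀ j, (cumT chunk j).card = j * n :=
    fun j => cumT_card chunk j n hchunkdisj hchunkcard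
  -- the value function bridge
  have hb : ∀ j, 1 ≤ j → ∀ (L : Finset F) (v : F),
      gval feats (cumT chunk j) (active feats τ L ∅ (cumT chunk j)) v = hv v L :=
    fun j hj L v => gval_eq_hval C τ n Sc label feats nA chunk hfeats hchunkdisj
      hcount j hj hn1 (hcardT j) L v
  -- global abstract runs
  have grunC : ∀ j : ℕ, CRun S hv (γ / (((j+1) * n : ℕ) : ℝ)) ∅ (usc (j+1)) := by
    intro j
    have := isRun_crun (hb (j+1) (by omega)) (hcold j)
    rwa [hcardT (j+1)] at this
  have grunI : ∀ j : ℕ, CRun S hv (γ / (((j+1) * n : ℕ) : ℝ)) (Li j) (usi (j+1)) := by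
    intro j
    have := isRun_crun (hb (j+1) (by omega)) (hideal j).1
    rwa [hcardT (j+1)] at this
  have hsubc : ∀ c : Fin C, Sc c ⊆ S :=
    fun c x hx => Finset.mem_biUnion.2 ⟨c, Finset.mem_univ _, hx⟩
  have hcong : ∀ c : Fin C, ∀ v ∈ Sc c, ∀ L L' : Finset F,
      L ∩ Sc c = L' ∩ Sc c → hv v L = hv v L' :=
    fun c v hvc L L' hE => hval_class_congr C τ n Sc nA hdisjS c v hvc L L' hE
  have hinjc : ∀ c : Fin C, ∀ L : Finset F, L ⊆ S → ∀ v₁ ∈ Sc c, ∀ v₂ ∈ Sc c,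
      hv v₁ L = hv v₂ L → v₁ = v₂ :=
    fun c L hL v₁ h₁ v₂ h₂ h => hinj L hL c v₁ h₁ v₂ h₂ h
  have hLiS : ∀ j, Li j ⊆ S := by
    intro j
    induction j with
    | zero => rw [hLi0]; exact Finset.empty_subset _
    | succ j ih =>
      rw [(hideal j).2]
      exact Finset.union_subset ih
        (fun x hx => crun_subset (grunI j) x (List.mem_toFinset.1 hx))
  have huscS : ∀ j : ℕ, (usc (j+1)).toFinset ⊆ S :=
    fun j x hx => crun_subset (grunC j) x (List.mem_toFinset.1 hx)
  have husiS : ∀ j : ℕ, (usi (j+1)).toFinset ⊆ S :=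
    fun j x hx => crun_subset (grunI j) x (List.mem_toFinset.1 hx)
  -- thresholds are monotone
  have hθ : ∀ j : ℕ, γ / (((j+2) * n : ℕ) : ℝ) ≤ γ / (((j+1) * n : ℕ) : ℝ) := by
    intro j
    have h1 : (0 : ℝ) < (((j+1) * n : ℕ) : ℝ) := by
      have : 0 < (j+1) * n := by positivity
      exact_mod_cast this
    have h2 : (((j+1) * n : ℕ) : ℝ) ≤ (((j+2) * n : ℕ) : ℝ) := by
      have : (j+1) * n ≤ (j+2) * n := Nat.mul_le_mul_right n (by omega)
      exact_mod_cast this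
    exact div_le_div_of_nonneg_left hγ.le h1 h2
  -- per-class extensionality and filter-toFinset
  have hext : ∀ A B : Finset F, A ⊆ S → B ⊆ S →
      (∀ c : Fin C, A ∩ Sc c = B ∩ Sc c) → A = B := by
    intro A B hA hB h
    ext x
    constructor
    · intro hx
      obtain ⟨c, -, hc⟩ := Finset.mem_biUnion.1 (hA hx)
      have : x ∈ A ∩ Sc c := Finset.mem_inter.2 ⟨hx, hc⟩
      rw [h c] at this
      exact (Finset.mem_inter.1 this).1
    · intro hx
      obtain ⟨c, -, hc⟩ := Finset.mem_biUnion.1 (hB hx)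
      have : x ∈ B ∩ Sc c := Finset.mem_inter.2 ⟨hx, hc⟩
      rw [← h c] at this
      exact (Finset.mem_inter.1 this).1
  have hft : ∀ (l : List F) (t : Finset F),
      (l.filter (· ∈ t)).toFinset = l.toFinset ∩ t := by
    intro l t
    ext x
    simp [List.mem_filter]
  -- main induction
  have key : ∀ j : ℕ, (usc (j+1)).toFinset = Li (j+1) := by
    intro j
    induction j with
    | zero =>
      have h1 : CRun S hv (γ / ((1 * n : ℕ) : ℝ)) ∅ (usc 1) := grunC 0
      have h2 : CRun S hv (γ / ((1 * n : ℕ) : ℝ)) ∅ (usi 1) := by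
        have := grunI 0
        rwa [hLi0] at this
      have hLi1 : Li 1 = (usi 1).toFinset := by
        rw [(hideal 0).2, hLi0, Finset.empty_union]
      rw [hLi1]
      refine hext _ _ (huscS 0) (husiS 0) fun c => ?_
      have := crun_unique (hsubc c) (hinjc c) (Finset.empty_subset S)
        (crun_filter (hsubc c) (hcong c) h1)
        (crun_filter (hsubc c) (hcong c) h2)
      rw [← hft (usc 1) (Sc c), ← hft (usi 1) (Sc c), this]
    | succ j ih =>
      refine hext _ _ (huscS (j+1)) (hLiS (j+2)) fun c => ?_
      have Rp := grunC j
      have Rc := grunC (j+1)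
      have Ri := grunI (j+1)
      have cw := crun_filter (hsubc c) (hcong c) Rp
      have cz0 := crun_filter (hsubc c) (hcong c) Ri
      have cw' := crun_filter (hsubc c) (hcong c) Rc
      have hE : Li (j+1) ∩ Sc c
          = (∅ ∪ ((usc (j+1)).filter (· ∈ Sc c)).toFinset) ∩ Sc c := by
        rw [Finset.empty_union, hft, ← ih, Finset.inter_assoc, Finset.inter_self]
      have cz := crun_congr (hcong c) hE cz0
      have hcat := crun_concat (hsubc c) (hθ j) (hinjc c) (Finset.empty_subset S)
        cw cz cw'
      rw [← hft (usc (j+2)) (Sc c), hcat, List.toFinset_append, hft, hft,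
        ih, (hideal (j+1)).2, Finset.union_inter_distrib_right]
  have key2 : ∀ J : ℕ, 1 ≤ J → (usc J).toFinset = Li J := by
    intro J hJ
    obtain ⟨j, rfl⟩ : ∃ j, J = j + 1 := ⟨J - 1, by omega⟩
    exact key j
  exact ⟨key2, fun J hJ => by rw [key2 J (by omega)]⟩
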